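/- Let the ALF have a complete sample space, let T be a realizable target specification, L a consistent learner, τ a teacher, and let seq : Ordinal → S be a transfinite sample sequence generated by L and τ. Then for every ordinal α: (a) either γ (L (seq α)) ∈ T, or both κ (seq (α+1)) is a strict subset of κ (seq α) and γ (L (seq α)) ∉ κ (seq (α+1)); and (b) T ⊆ κ (seq α). -/

import Mathlib

/-- progress and honesty along a transfinite sample sequence in an ALF
with a complete sample space. -/
theorem transfinite_progress_and_honesty {C H S : Type*} [CompleteLattice S]
    (γ : H → C) (κ : S → Set C)
    (hbot : κ (⊥ : S) = Set.univ)
    (hsup : ∀ s₁ s₂ : S, κ (s₁ ⊔ s₂) = κ s₁ ∩ κ s₂)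
    (hsSup : ∀ A : Set S, κ (sSup A) = ⋂ s ∈ A, κ s)
    (T : Set C) (hT : ∃ h : H, γ h ∈ T)
    (L : S → H)
    (hL : ∀ s : S, (∃ h : H, γ h ∈ κ s) → γ (L s) ∈ κ s)
    (τ : H → S)
    (hprog₁ : ∀ h : H, γ h ∈ T → τ h = ⊥)
    (hprog₂ : ∀ h : H, γ h ∉ T → γ h ∉ κ (τ h))
    (hhonest : ∀ h : H, T ⊆ κ (τ h))
    (seq : Ordinal → S)
    (hseq0 : seq 0 = ⊥)
    (hseqsucc : ∀ α : Ordinal, seq (α + 1) = seq α ⊔ τ (L (seq α)))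
    (hseqlim : ∀ α : Ordinal, Order.IsSuccLimit α → seq α = ⨆ β < α, seq β) :
    ∀ α : Ordinal,
      (γ (L (seq α)) ∈ T ∨
        (κ (seq (α + 1)) ⊂ κ (seq α) ∧ γ (L (seq α)) ∉ κ (seq (α + 1)))) ∧
      T ⊆ κ (seq α) := by
  -- First: honesty by transfinite induction
  have honest : ∀ α : Ordinal, T ⊆ κ (seq α) := by
    intro α
    induction α using Ordinal.limitRecOn with
    | zero => rw [hseq0, hbot]; exact Set.subset_univ T
    | add_one β ih =>
      rw [hseqsucc, hsup]
      exact Set.subset_inter ih (hhonest _)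
    | limit β hlim ih =>
      rw [hseqlim β hlim]
      have : (⨆ δ < β, seq δ) = sSup (seq '' {δ | δ < β}) := by
        rw [sSup_image]; rfl
      rw [this, hsSup]
      intro c hc
      simp only [Set.mem_iInter]
      rintro s ⟨δ, hδ, rfl⟩
      exact ih δ hδ hc
  intro α
  refine ⟨?_, honest α⟩
  by_cases hmem : γ (L (seq α)) ∈ T
  · exact Or.inl hmem
  · right
    obtain ⟨h, hh⟩ := hT
    have hreal : γ (L (seq α)) ∈ κ (seq α) := hL _ ⟨h, honest α hh⟩
    have hκ : κ (seq (α + 1)) = κ (seq α) ∩ κ (τ (L (seq α))) := by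
      rw [hseqsucc, hsup]
    have hnot : γ (L (seq α)) ∉ κ (seq (α + 1)) := by
      rw [hκ]
      exact fun hx => hprog₂ _ hmem hx.2
    refine ⟨⟨?_, ?_⟩, hnot⟩
    · rw [hκ]; exact Set.inter_subset_left
    · intro hsub
      exact hnot (hsub hreal)
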